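/- Let D(g) be the Drinfel'd double Lie algebra of a finite-dimensional real Lie bialgebra with structure constants (f, c) satisfying the compatibility condition, and let ι : D(g) → U(D(g)) be the canonical embedding into its universal enveloping algebra. Define Ω = Σ_i (ι(x^i) ⊗ ι(X_i) + ι(X_i) ⊗ ι(x^i)) in U(D(g)) ⊗ U(D(g)). Then for every element Y of D(g), the commutator [ι(Y) ⊗ 1 + 1 ⊗ ι(Y), Ω] vanishes in the algebra U(D(g)) ⊗ U(D(g)); i.e., Ω is ad-invariant. -/

import Mathlib

open scoped BigOperators TensorProduct

private lemma skew_cancel {ι : Type*} [Fintype ι] {M : Type*} [AddCommGroup M] [Module ℝ M]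
    (g : ι → ι → ℝ) (hg : ∀ i k, g k i = - g i k) (p : ι → ι → M) (hp : ∀ i k, p k i = p i k) :
    ∑ i, ∑ k, g i k • p i k = 0 := by
  have h : (∑ i, ∑ k, g i k • p i k) = - ∑ i, ∑ k, g i k • p i k := by
    calc (∑ i, ∑ k, g i k • p i k) = ∑ k, ∑ i, g i k • p i k := Finset.sum_comm
    _ = ∑ k, ∑ i, -(g k i • p k i) := by
        refine Finset.sum_congr rfl fun k _ => Finset.sum_congr rfl fun i _ => ?_
        rw [hg i k, hp i k, neg_smul, neg_neg]
    _ = - ∑ i, ∑ k, g i k • p i k := by simp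
  have h2 : (2 : ℝ) • (∑ i, ∑ k, g i k • p i k) = 0 := by
    rw [two_smul]; nth_rewrite 1 [h]; abel
  simpa [smul_eq_zero] using h2

set_option maxHeartbeats 1000000 in
theorem double_omega_ad_invariant (n : ℕ) (f c : Fin n → Fin n → Fin n → ℝ)
    (hcomp : ∀ a b i j : Fin n,
      (∑ k, f a b k * c k i j) =
        ∑ k, (f a k i * c b k j + f k b i * c a k j + f a k j * c b i k +
          f k b j * c a i k))
    (L : Type) [LieRing L] [LieAlgebra ℝ L]
    (b : Module.Basis (Fin n ⊕ Fin n) ℝ L)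
    (hxx : ∀ i j, ⁅b (Sum.inl i), b (Sum.inl j)⁆ = ∑ k, f i j k • b (Sum.inl k))
    (hXX : ∀ i j, ⁅b (Sum.inr i), b (Sum.inr j)⁆ = ∑ k, c k i j • b (Sum.inr k))
    (hxX : ∀ i j, ⁅b (Sum.inl i), b (Sum.inr j)⁆ =
      (∑ k, c i j k • b (Sum.inl k)) - ∑ k, f i k j • b (Sum.inr k)) :
    ∀ Y : L,
      (UniversalEnvelopingAlgebra.ι ℝ Y ⊗ₜ[ℝ] (1 : UniversalEnvelopingAlgebra ℝ L) +
            (1 : UniversalEnvelopingAlgebra ℝ L) ⊗ₜ[ℝ] UniversalEnvelopingAlgebra.ι ℝ Y) *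
          (∑ i : Fin n,
            (UniversalEnvelopingAlgebra.ι ℝ (b (Sum.inl i)) ⊗ₜ[ℝ]
                UniversalEnvelopingAlgebra.ι ℝ (b (Sum.inr i)) +
              UniversalEnvelopingAlgebra.ι ℝ (b (Sum.inr i)) ⊗ₜ[ℝ]
                UniversalEnvelopingAlgebra.ι ℝ (b (Sum.inl i)))) -
        (∑ i : Fin n,
            (UniversalEnvelopingAlgebra.ι ℝ (b (Sum.inl i)) ⊗ₜ[ℝ]
                UniversalEnvelopingAlgebra.ι ℝ (b (Sum.inr i)) +
              UniversalEnvelopingAlgebra.ι ℝ (b (Sum.inr i)) ⊗ₜ[ℝ]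
                UniversalEnvelopingAlgebra.ι ℝ (b (Sum.inl i)))) *
          (UniversalEnvelopingAlgebra.ι ℝ Y ⊗ₜ[ℝ] (1 : UniversalEnvelopingAlgebra ℝ L) +
            (1 : UniversalEnvelopingAlgebra ℝ L) ⊗ₜ[ℝ] UniversalEnvelopingAlgebra.ι ℝ Y) = 0 := by
  classical
  letI : LieRing (UniversalEnvelopingAlgebra ℝ L) := LieRing.ofAssociativeRing
  set ι' : L →ₗ⁅ℝ⁆ UniversalEnvelopingAlgebra ℝ L := UniversalEnvelopingAlgebra.ι ℝ with hι'
  -- antisymmetry of structure constants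
  have hlinl := Fintype.linearIndependent_iff.mp
    (b.linearIndependent.comp Sum.inl Sum.inl_injective)
  have hlinr := Fintype.linearIndependent_iff.mp
    (b.linearIndependent.comp Sum.inr Sum.inr_injective)
  have hf : ∀ i j k, f j i k = - f i j k := by
    intro i j k
    have h0 : ⁅b (Sum.inl i), b (Sum.inl j)⁆ + ⁅b (Sum.inl j), b (Sum.inl i)⁆ = 0 := by
      rw [← lie_skew (b (Sum.inl i))]; abel
    rw [hxx, hxx, ← Finset.sum_add_distrib] at h0
    have := hlinl (fun k => f i j k + f j i k) (by
      simpa [Function.comp, add_smul] using h0) k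
    linarith
  have hc : ∀ k i j, c k j i = - c k i j := by
    intro k i j
    have h0 : ⁅b (Sum.inr i), b (Sum.inr j)⁆ + ⁅b (Sum.inr j), b (Sum.inr i)⁆ = 0 := by
      rw [← lie_skew (b (Sum.inr i))]; abel
    rw [hXX, hXX, ← Finset.sum_add_distrib] at h0
    have := hlinr (fun k => c k i j + c k j i) (by
      simpa [Function.comp, add_smul] using h0) k
    linarith
  -- derivation property of the adjoint action
  have key : ∀ (y a a' : L),
      (ι' y ⊗ₜ[ℝ] 1 + 1 ⊗ₜ[ℝ] ι' y) * (ι' a ⊗ₜ[ℝ] ι' a')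
        - (ι' a ⊗ₜ[ℝ] ι' a') * (ι' y ⊗ₜ[ℝ] 1 + 1 ⊗ₜ[ℝ] ι' y)
      = ι' ⁅y, a⁆ ⊗ₜ[ℝ] ι' a' + ι' a ⊗ₜ[ℝ] ι' ⁅y, a'⁆ := by
    intro y a a'
    simp only [add_mul, mul_add, Algebra.TensorProduct.tmul_mul_tmul, one_mul, mul_one,
      LieHom.map_lie, Ring.lie_def, TensorProduct.sub_tmul, TensorProduct.tmul_sub]
    abel
  intro Y
  set Ω : UniversalEnvelopingAlgebra ℝ L ⊗[ℝ] UniversalEnvelopingAlgebra ℝ L :=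
    ∑ i : Fin n, (ι' (b (Sum.inl i)) ⊗ₜ[ℝ] ι' (b (Sum.inr i)) +
      ι' (b (Sum.inr i)) ⊗ₜ[ℝ] ι' (b (Sum.inl i))) with hΩ
  let D : L →ₗ[ℝ] UniversalEnvelopingAlgebra ℝ L ⊗[ℝ] UniversalEnvelopingAlgebra ℝ L :=
    { toFun := fun y => ι' y ⊗ₜ[ℝ] 1 + 1 ⊗ₜ[ℝ] ι' y
      map_add' := by
        intro y z
        simp only [map_add, TensorProduct.add_tmul, TensorProduct.tmul_add]
        abel
      map_smul' := by
        intro r y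
        simp [map_smul, TensorProduct.smul_tmul', TensorProduct.tmul_smul, smul_add] }
  have hφ : (LinearMap.mulRight ℝ Ω - LinearMap.mulLeft ℝ Ω).comp D = 0 := by
    apply b.ext
    intro s
    have hDs : D (b s) = ι' (b s) ⊗ₜ[ℝ] 1 + 1 ⊗ₜ[ℝ] ι' (b s) := rfl
    simp only [LinearMap.comp_apply, LinearMap.sub_apply, LinearMap.mulRight_apply,
      LinearMap.mulLeft_apply, LinearMap.zero_apply, hDs, hΩ]
    rw [Finset.mul_sum, Finset.sum_mul, ← Finset.sum_sub_distrib]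
    have expand : ∀ A P Q : UniversalEnvelopingAlgebra ℝ L ⊗[ℝ] UniversalEnvelopingAlgebra ℝ L,
        A * (P + Q) - (P + Q) * A = (A * P - P * A) + (A * Q - Q * A) := by
      intros; noncomm_ring
    have step : ∀ i : Fin n,
        (ι' (b s) ⊗ₜ[ℝ] 1 + 1 ⊗ₜ[ℝ] ι' (b s)) *
            (ι' (b (Sum.inl i)) ⊗ₜ[ℝ] ι' (b (Sum.inr i)) +
              ι' (b (Sum.inr i)) ⊗ₜ[ℝ] ι' (b (Sum.inl i))) -
          (ι' (b (Sum.inl i)) ⊗ₜ[ℝ] ι' (b (Sum.inr i)) +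
              ι' (b (Sum.inr i)) ⊗ₜ[ℝ] ι' (b (Sum.inl i))) *
            (ι' (b s) ⊗ₜ[ℝ] 1 + 1 ⊗ₜ[ℝ] ι' (b s)) =
        (ι' ⁅b s, b (Sum.inl i)⁆ ⊗ₜ[ℝ] ι' (b (Sum.inr i)) +
            ι' (b (Sum.inl i)) ⊗ₜ[ℝ] ι' ⁅b s, b (Sum.inr i)⁆) +
          (ι' ⁅b s, b (Sum.inr i)⁆ ⊗ₜ[ℝ] ι' (b (Sum.inl i)) +
            ι' (b (Sum.inr i)) ⊗ₜ[ℝ] ι' ⁅b s, b (Sum.inl i)⁆) := by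
      intro i
      rw [expand, key, key]
    have ιsub : ∀ x y : L, ι' (x - y) = ι' x - ι' y := fun x y => by
      rw [← LieHom.coe_toLinearMap]; simp
    have ιsum : ∀ (g : Fin n → ℝ) (w : Fin n → L),
        ι' (∑ k, g k • w k) = ∑ k, g k • ι' (w k) := fun g w => by
      rw [← LieHom.coe_toLinearMap]; simp
    rw [Finset.sum_congr rfl fun i _ => step i]
    rcases s with a | a
    · simp only [hxx, hxX, ιsub, ιsum]
      simp only [TensorProduct.sum_tmul, TensorProduct.tmul_sum,
        TensorProduct.sub_tmul, TensorProduct.tmul_sub, TensorProduct.tmul_smul,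
        ← TensorProduct.smul_tmul', TensorProduct.smul_tmul]
      simp only [Finset.sum_add_distrib, Finset.sum_sub_distrib]
      have e13 : (∑ x : Fin n, ∑ y : Fin n,
            f a x y • ι' (b (Sum.inl y)) ⊗ₜ[ℝ] ι' (b (Sum.inr x)))
          = ∑ x : Fin n, ∑ y : Fin n,
            f a y x • ι' (b (Sum.inl x)) ⊗ₜ[ℝ] ι' (b (Sum.inr y)) := Finset.sum_comm
      have e65 : (∑ x : Fin n, ∑ y : Fin n,
            f a x y • ι' (b (Sum.inr x)) ⊗ₜ[ℝ] ι' (b (Sum.inl y)))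
          = ∑ x : Fin n, ∑ y : Fin n,
            f a y x • ι' (b (Sum.inr y)) ⊗ₜ[ℝ] ι' (b (Sum.inl x)) := Finset.sum_comm
      have e24 : (∑ x : Fin n, ∑ y : Fin n,
            c a x y • ι' (b (Sum.inl x)) ⊗ₜ[ℝ] ι' (b (Sum.inl y)))
          + (∑ x : Fin n, ∑ y : Fin n,
            c a x y • ι' (b (Sum.inl y)) ⊗ₜ[ℝ] ι' (b (Sum.inl x))) = 0 := by
        have := skew_cancel (fun i k => c a i k) (fun i k => hc a i k)
          (fun i k => ι' (b (Sum.inl i)) ⊗ₜ[ℝ] ι' (b (Sum.inl k)) +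
            ι' (b (Sum.inl k)) ⊗ₜ[ℝ] ι' (b (Sum.inl i)))
          (fun i k => add_comm _ _)
        simpa [smul_add, Finset.sum_add_distrib] using this
      rw [e13, e65, ← e24]
      abel
    · have hXx : ∀ i, ⁅b (Sum.inr a), b (Sum.inl i)⁆ =
          (∑ k, f i k a • b (Sum.inr k)) - ∑ k, c i a k • b (Sum.inl k) := by
        intro i
        rw [← lie_skew, hxX, neg_sub]
      simp only [hXX, hXx, ιsub, ιsum]
      simp only [TensorProduct.sum_tmul, TensorProduct.tmul_sum,
        TensorProduct.sub_tmul, TensorProduct.tmul_sub, TensorProduct.tmul_smul,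
        ← TensorProduct.smul_tmul', TensorProduct.smul_tmul]
      simp only [Finset.sum_add_distrib, Finset.sum_sub_distrib]
      have e13 : (∑ x : Fin n, ∑ y : Fin n,
            c x a y • ι' (b (Sum.inl y)) ⊗ₜ[ℝ] ι' (b (Sum.inr x)))
          = ∑ x : Fin n, ∑ y : Fin n,
            c y a x • ι' (b (Sum.inl x)) ⊗ₜ[ℝ] ι' (b (Sum.inr y)) := Finset.sum_comm
      have e65 : (∑ x : Fin n, ∑ y : Fin n,
            c x a y • ι' (b (Sum.inr x)) ⊗ₜ[ℝ] ι' (b (Sum.inl y)))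
          = ∑ x : Fin n, ∑ y : Fin n,
            c y a x • ι' (b (Sum.inr y)) ⊗ₜ[ℝ] ι' (b (Sum.inl x)) := Finset.sum_comm
      have e24 : (∑ x : Fin n, ∑ y : Fin n,
            f x y a • ι' (b (Sum.inr y)) ⊗ₜ[ℝ] ι' (b (Sum.inr x)))
          + (∑ x : Fin n, ∑ y : Fin n,
            f x y a • ι' (b (Sum.inr x)) ⊗ₜ[ℝ] ι' (b (Sum.inr y))) = 0 := by
        have := skew_cancel (fun i k => f i k a) (fun i k => hf i k a)
          (fun i k => ι' (b (Sum.inr k)) ⊗ₜ[ℝ] ι' (b (Sum.inr i)) +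
            ι' (b (Sum.inr i)) ⊗ₜ[ℝ] ι' (b (Sum.inr k)))
          (fun i k => add_comm _ _)
        simpa [smul_add, Finset.sum_add_distrib] using this
      rw [e13, e65, ← e24]
      abel
  have := DFunLike.congr_fun hφ Y
  simpa only [LinearMap.comp_apply, LinearMap.sub_apply, LinearMap.mulRight_apply,
    LinearMap.mulLeft_apply, LinearMap.zero_apply, sub_eq_zero, D, LinearMap.coe_mk,
    AddHom.coe_mk] using this
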